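/- Let S, P_A, P_B be unital complex algebras, σ_A, σ_B linear functionals on P_A, P_B, and Θ_A, Θ_B unital algebra automorphisms of S⊗P_A and S⊗P_B with extensions Θ̂_A, Θ̂_B to S⊗P_A⊗P_B (Θ̂_A acting on factors one and two, Θ̂_B on factors one and three). If Θ̂_A ∘ Θ̂_B = Θ̂_B ∘ Θ̂_A, then for all O_A ∈ P_A and O_B ∈ P_B: (id_S⊗σ_A⊗σ_B)((Θ̂_A ∘ Θ̂_B)(1⊗O_A⊗O_B)) = ε_A(O_A) · ε_B(O_B) in S, where ε_A(O) := (id_S⊗σ_A)(Θ_A(1⊗O)) and ε_B(O) := (id_S⊗σ_B)(Θ_B(1⊗O)). That is, the induced observable of the combined probe observable O_A⊗O_B is the product of the individual induced observables. -/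

import Mathlib

open scoped TensorProduct

noncomputable section

variable {S PA PB : Type*} [Ring S] [Algebra ℂ S]
  [Ring PA] [Algebra ℂ PA] [Ring PB] [Algebra ℂ PB]

/-- The tensor product `ω ⊗ σ` of two linear functionals, determined by
`(ω ⊗ σ)(a ⊗ b) = ω a * σ b`. -/
def tensorFunctional {A B : Type*} [Ring A] [Algebra ℂ A]
    [Ring B] [Algebra ℂ B] (ω : A →ₗ[ℂ] ℂ) (σ : B →ₗ[ℂ] ℂ) :
    A ⊗[ℂ] B →ₗ[ℂ] ℂ :=
  (TensorProduct.lid ℂ ℂ).toLinearMap.comp (TensorProduct.map ω σ)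

/-- The partial trace `id_S ⊗ σ : S ⊗ P →ₗ S`, determined by `a ⊗ b ↦ σ(b) • a`. -/
def idTensorFunctional (S : Type*) [Ring S] [Algebra ℂ S] {P : Type*}
    [Ring P] [Algebra ℂ P] (σ : P →ₗ[ℂ] ℂ) : S ⊗[ℂ] P →ₗ[ℂ] S :=
  (TensorProduct.rid ℂ S).toLinearMap.comp (TensorProduct.map LinearMap.id σ)

/-- The rearrangement isomorphism `(S ⊗ P_A) ⊗ P_B ≃ (S ⊗ P_B) ⊗ P_A`
exchanging the two probe factors. -/
def probeSwap (S PA PB : Type*) [Ring S] [Algebra ℂ S]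
    [Ring PA] [Algebra ℂ PA] [Ring PB] [Algebra ℂ PB] :
    ((S ⊗[ℂ] PA) ⊗[ℂ] PB) ≃ₐ[ℂ] ((S ⊗[ℂ] PB) ⊗[ℂ] PA) :=
  (Algebra.TensorProduct.assoc ℂ ℂ ℂ S PA PB).trans
    ((Algebra.TensorProduct.congr AlgEquiv.refl
        (Algebra.TensorProduct.comm ℂ PA PB)).trans
      (Algebra.TensorProduct.assoc ℂ ℂ ℂ S PB PA).symm)

/-- The extension `Θ̂_A` of an automorphism `Θ_A` of `S ⊗ P_A` to
`(S ⊗ P_A) ⊗ P_B`, acting trivially on `P_B`. -/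
def hatA (ΘA : (S ⊗[ℂ] PA) ≃ₐ[ℂ] (S ⊗[ℂ] PA)) :
    ((S ⊗[ℂ] PA) ⊗[ℂ] PB) ≃ₐ[ℂ] ((S ⊗[ℂ] PA) ⊗[ℂ] PB) :=
  Algebra.TensorProduct.congr ΘA AlgEquiv.refl

/-- The extension `Θ̂_B` of an automorphism `Θ_B` of `S ⊗ P_B` to
`(S ⊗ P_A) ⊗ P_B`, acting on the first and third tensor factors and trivially
on `P_A`. -/
def hatB (ΘB : (S ⊗[ℂ] PB) ≃ₐ[ℂ] (S ⊗[ℂ] PB)) :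
    ((S ⊗[ℂ] PA) ⊗[ℂ] PB) ≃ₐ[ℂ] ((S ⊗[ℂ] PA) ⊗[ℂ] PB) :=
  (probeSwap S PA PB).trans ((Algebra.TensorProduct.congr ΘB AlgEquiv.refl).trans
    (probeSwap S PA PB).symm)

/-- The induced system observable `ε(O) = (id_S ⊗ σ)(Θ (1 ⊗ O))` of a probe
observable `O`. -/
def inducedObservable {P : Type*} [Ring P] [Algebra ℂ P] (σ : P →ₗ[ℂ] ℂ)
    (Θ : (S ⊗[ℂ] P) ≃ₐ[ℂ] (S ⊗[ℂ] P)) (O : P) : S :=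
  idTensorFunctional S σ (Θ ((1 : S) ⊗ₜ[ℂ] O))

/-- The partial trace `id_S ⊗ σ_A ⊗ σ_B : S ⊗ P_A ⊗ P_B →ₗ S`, determined by
`a ⊗ b ⊗ c ↦ σ_A(b) σ_B(c) • a`. -/
def idTensorFunctional₂ (σA : PA →ₗ[ℂ] ℂ) (σB : PB →ₗ[ℂ] ℂ) :
    (S ⊗[ℂ] PA) ⊗[ℂ] PB →ₗ[ℂ] S :=
  (idTensorFunctional S σB).comp
    (TensorProduct.map (idTensorFunctional S σA) LinearMap.id)

lemma probeSwap_tmul (s : S) (a : PA) (b : PB) :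
    probeSwap S PA PB ((s ⊗ₜ[ℂ] a) ⊗ₜ[ℂ] b) = (s ⊗ₜ[ℂ] b) ⊗ₜ[ℂ] a := by
  simp [probeSwap, Algebra.TensorProduct.assoc_tmul, Algebra.TensorProduct.comm_tmul]

lemma probeSwap_symm_tmul (s : S) (a : PA) (b : PB) :
    (probeSwap S PA PB).symm ((s ⊗ₜ[ℂ] b) ⊗ₜ[ℂ] a) = (s ⊗ₜ[ℂ] a) ⊗ₜ[ℂ] b := by
  rw [AlgEquiv.symm_apply_eq, probeSwap_tmul]

lemma idTensorFunctional_tmul {P : Type*} [Ring P] [Algebra ℂ P]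
    (σ : P →ₗ[ℂ] ℂ) (s : S) (p : P) :
    idTensorFunctional S σ (s ⊗ₜ[ℂ] p) = σ p • s := by
  simp [idTensorFunctional]

lemma key_mul (σA : PA →ₗ[ℂ] ℂ) (σB : PB →ₗ[ℂ] ℂ) (x : S ⊗[ℂ] PA) (y : S ⊗[ℂ] PB) :
    idTensorFunctional₂ σA σB
      ((x ⊗ₜ[ℂ] (1 : PB)) * (probeSwap S PA PB).symm (y ⊗ₜ[ℂ] (1 : PA)))
    = idTensorFunctional S σA x * idTensorFunctional S σB y := by
  induction x using TensorProduct.induction_on with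
  | zero => simp [TensorProduct.zero_tmul]
  | tmul s a =>
    induction y using TensorProduct.induction_on with
    | zero => simp [TensorProduct.zero_tmul]
    | tmul t b =>
      rw [probeSwap_symm_tmul, Algebra.TensorProduct.tmul_mul_tmul,
        Algebra.TensorProduct.tmul_mul_tmul, mul_one, one_mul]
      simp only [idTensorFunctional₂, idTensorFunctional_tmul, LinearMap.comp_apply,
        TensorProduct.map_tmul, LinearMap.id_apply, idTensorFunctional_tmul,
        TensorProduct.smul_tmul', smul_smul]
      rw [smul_mul_smul_comm]
      ring_nf
    | add y1 y2 h1 h2 =>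
      rw [TensorProduct.add_tmul, map_add, map_add, mul_add, map_add, h1, h2, mul_add]
  | add x1 x2 h1 h2 =>
    rw [TensorProduct.add_tmul, add_mul, map_add, h1, h2, map_add, add_mul]

lemma hatB_apply (ΘB : (S ⊗[ℂ] PB) ≃ₐ[ℂ] (S ⊗[ℂ] PB)) (x : (S ⊗[ℂ] PA) ⊗[ℂ] PB) :
    hatB ΘB x = (probeSwap S PA PB).symm
      ((Algebra.TensorProduct.congr ΘB (AlgEquiv.refl (A₁ := PA))) (probeSwap S PA PB x)) := rfl

/-- For spacelike separated probes (expressed by commutation of the extended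
scattering maps), the induced observable of the combined probe observable
`O_A ⊗ O_B` is the product of the individual induced observables:
`(id_S ⊗ σ_A ⊗ σ_B)((Θ̂_A ∘ Θ̂_B)(1 ⊗ O_A ⊗ O_B)) = ε_A(O_A) * ε_B(O_B)`. -/
theorem induced_observable_of_combined_probe
    (σA : PA →ₗ[ℂ] ℂ) (σB : PB →ₗ[ℂ] ℂ)
    (ΘA : (S ⊗[ℂ] PA) ≃ₐ[ℂ] (S ⊗[ℂ] PA)) (ΘB : (S ⊗[ℂ] PB) ≃ₐ[ℂ] (S ⊗[ℂ] PB))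
    (hcomm : ∀ x : (S ⊗[ℂ] PA) ⊗[ℂ] PB,
      (hatA ΘA) ((hatB ΘB) x) = (hatB ΘB) ((hatA ΘA) x))
    (OA : PA) (OB : PB) :
    idTensorFunctional₂ σA σB
      ((hatA ΘA) ((hatB ΘB) (((1 : S) ⊗ₜ[ℂ] OA) ⊗ₜ[ℂ] OB)))
    = inducedObservable σA ΘA OA * inducedObservable σB ΘB OB := by
  have e1 : ((1:S) ⊗ₜ[ℂ] OA) ⊗ₜ[ℂ] OB
      = ((((1:S) ⊗ₜ[ℂ] OA) ⊗ₜ[ℂ] (1:PB)) *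
        (((1:S) ⊗ₜ[ℂ] (1:PA)) ⊗ₜ[ℂ] OB) : (S ⊗[ℂ] PA) ⊗[ℂ] PB) := by
    simp [Algebra.TensorProduct.tmul_mul_tmul]
  have hone : (ΘB ((1:S) ⊗ₜ[ℂ] (1:PB))) = (1:S) ⊗ₜ[ℂ] (1:PB) := by
    rw [← Algebra.TensorProduct.one_def, map_one]
  have honeA : (ΘA ((1:S) ⊗ₜ[ℂ] (1:PA))) = (1:S) ⊗ₜ[ℂ] (1:PA) := by
    rw [← Algebra.TensorProduct.one_def, map_one]
  have hBfix : hatB ΘB (((1:S) ⊗ₜ[ℂ] OA) ⊗ₜ[ℂ] (1:PB))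
      = ((1:S) ⊗ₜ[ℂ] OA) ⊗ₜ[ℂ] (1:PB) := by
    rw [hatB_apply, probeSwap_tmul, Algebra.TensorProduct.congr_apply,
      Algebra.TensorProduct.map_tmul]
    simp only [AlgEquiv.toAlgHom_eq_coe, AlgEquiv.coe_toAlgHom, AlgHom.coe_coe, AlgEquiv.coe_refl, id_eq, hone]
    rw [probeSwap_symm_tmul]
  have hAfix : hatA ΘA (((1:S) ⊗ₜ[ℂ] (1:PA)) ⊗ₜ[ℂ] OB)
      = ((1:S) ⊗ₜ[ℂ] (1:PA)) ⊗ₜ[ℂ] OB := by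
    rw [hatA, Algebra.TensorProduct.congr_apply, Algebra.TensorProduct.map_tmul]
    simp only [AlgEquiv.toAlgHom_eq_coe, AlgEquiv.coe_toAlgHom, AlgHom.coe_coe, AlgEquiv.coe_refl, id_eq, honeA]
  have hAtmul : hatA ΘA (((1:S) ⊗ₜ[ℂ] OA) ⊗ₜ[ℂ] (1:PB))
      = (ΘA ((1:S) ⊗ₜ[ℂ] OA)) ⊗ₜ[ℂ] (1:PB) := by
    rw [hatA, Algebra.TensorProduct.congr_apply, Algebra.TensorProduct.map_tmul]
    simp only [AlgEquiv.toAlgHom_eq_coe, AlgEquiv.coe_toAlgHom, AlgHom.coe_coe, AlgEquiv.coe_refl, id_eq]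
  have hBtmul : hatB ΘB (((1:S) ⊗ₜ[ℂ] (1:PA)) ⊗ₜ[ℂ] OB)
      = (probeSwap S PA PB).symm ((ΘB ((1:S) ⊗ₜ[ℂ] OB)) ⊗ₜ[ℂ] (1:PA) :
          (S ⊗[ℂ] PB) ⊗[ℂ] PA) := by
    rw [hatB_apply, probeSwap_tmul, Algebra.TensorProduct.congr_apply,
      Algebra.TensorProduct.map_tmul]
    simp only [AlgEquiv.toAlgHom_eq_coe, AlgEquiv.coe_toAlgHom, AlgHom.coe_coe, AlgEquiv.coe_refl, id_eq]
  have step : (hatA ΘA) ((hatB ΘB) (((1 : S) ⊗ₜ[ℂ] OA) ⊗ₜ[ℂ] OB))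
      = ((ΘA ((1:S) ⊗ₜ[ℂ] OA)) ⊗ₜ[ℂ] (1:PB)) *
          (probeSwap S PA PB).symm ((ΘB ((1:S) ⊗ₜ[ℂ] OB)) ⊗ₜ[ℂ] (1:PA)) := by
    rw [e1, map_mul, hBfix, map_mul, hAtmul, hcomm, hAfix, hBtmul]
  rw [step, key_mul]
  rfl

end
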